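/- Let n ≥ 1, let ω ∈ ℂ be a primitive n-th root of unity, and let the Fourier n × n matrix have rows E_0, …, E_{n-1} with E_i = (ω^{i·0}, ω^{i·1}, …, ω^{i·(n-1)}) ∈ ℂ^n. Let 1 ≤ u < n, let k ≥ 1 satisfy gcd(n, k) = 1, and let j_1, …, j_u ∈ {0, …, n-1} with j_{l+1} ≡ j_l + k (mod n) for l = 1, …, u−1. Let C^⊥ = span{E_{j_1}, …, E_{j_u}} ⊆ ℂ^n and let 𝒞 = (C^⊥)^⊥ be its dual code. Then 𝒞 is an MDS (n, n−u, u+1) code: dim 𝒞 = n − u and the minimum distance of 𝒞 equals u + 1. -/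

import Mathlib

open Finset

noncomputable section

/-- The componentwise (star) product on `Fin n → F`. -/
def starMul {F : Type*} [Mul F] {n : ℕ} (u v : Fin n → F) : Fin n → F :=
  fun i => u i * v i

/-- The standard bilinear form `⟨u,v⟩ = ∑ i, u i * v i` on `Fin n → F`. -/
def bil {F : Type*} [Semiring F] {n : ℕ} (u v : Fin n → F) : F :=
  ∑ i, u i * v i

/-- The Hamming weight of a vector: the number of its nonzero coordinates. -/
def hWeight {F : Type*} [Zero F] {n : ℕ} (v : Fin n → F) : ℕ :=
  Set.ncard {i | v i ≠ 0}

/-- The dual code of a linear code `C ⊆ F^n` with respect to `⟨u,v⟩ = ∑ i, u i * v i`. -/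
def dualCode {F : Type*} [Field F] {n : ℕ} (C : Submodule F (Fin n → F)) :
    Submodule F (Fin n → F) where
  carrier := {x | ∀ c ∈ C, bil x c = 0}
  zero_mem' := by
    intro c hc
    simp [bil]
  add_mem' := by
    intro a b ha hb c hc
    have h : bil (a + b) c = bil a c + bil b c := by
      simp only [bil, Pi.add_apply, add_mul]
      exact Finset.sum_add_distrib
    simp only [Set.mem_setOf_eq] at ha hb ⊢
    rw [h, ha c hc, hb c hc, add_zero]
  smul_mem' := by
    intro r a ha c hc
    have h : bil (r • a) c = r * bil a c := by
      simp only [bil, Pi.smul_apply, smul_eq_mul, Finset.mul_sum, mul_assoc]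
    simp only [Set.mem_setOf_eq] at ha ⊢
    rw [h, ha c hc, mul_zero]

/-- The minimum distance of a code: the least Hamming weight of a nonzero codeword. -/
def minDist {F : Type*} [Field F] {n : ℕ} (C : Submodule F (Fin n → F)) : ℕ :=
  sInf {d | ∃ c ∈ C, c ≠ 0 ∧ hWeight c = d}

/-- A code is MDS if its minimum distance equals `n - dim + 1`. -/
def IsMDS {F : Type*} [Field F] {n : ℕ} (C : Submodule F (Fin n → F)) : Prop :=
  minDist C = n - Module.finrank F C + 1

/-- `U*V`: the span of all componentwise products `u*v` with `u ∈ U`, `v ∈ V`. -/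
def starSpan {F : Type*} [Field F] {n : ℕ} (U V : Submodule F (Fin n → F)) :
    Submodule F (Fin n → F) :=
  Submodule.span F {w | ∃ u ∈ U, ∃ v ∈ V, w = starMul u v}

/-- `(U, V)` is a `t`-error correcting pair for `C`. -/
def IsECP {F : Type*} [Field F] {n : ℕ} (t : ℕ) (U V C : Submodule F (Fin n → F)) : Prop :=
  starSpan U V ≤ dualCode C ∧
  t < Module.finrank F U ∧
  n < minDist U + minDist C ∧
  t < minDist (dualCode V)

section Aux

variable {n : ℕ}

lemma hWeight_eq_card {F : Type*} [Zero F] [DecidableEq F] (v : Fin n → F) :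
    hWeight v = (Finset.univ.filter (fun i => v i ≠ 0)).card := by
  classical
  rw [hWeight, Set.ncard_eq_toFinset_card']
  congr 1
  ext i
  simp

lemma pow_mod_n {ω : ℂ} (hω : ω ^ n = 1) (a : ℕ) : ω ^ a = ω ^ (a % n) := by
  conv_lhs => rw [← Nat.div_add_mod a n]
  rw [pow_add, pow_mul, hω, one_pow, one_mul]

lemma pow_congr' {ω : ℂ} (hω : ω ^ n = 1) {a b : ℕ} (h : a ≡ b [MOD n]) : ω ^ a = ω ^ b := by
  have h' : a % n = b % n := h
  rw [pow_mod_n hω a, pow_mod_n hω b, h']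

lemma entry_eq {ω : ℂ} (hω : ω ^ n = 1) {j0 l k j : ℕ} (h : j ≡ j0 + l * k [MOD n]) (m : ℕ) :
    ω ^ (j * m) = ω ^ (j0 * m) * (ω ^ (k * m)) ^ l := by
  have h1 : ω ^ (j * m) = ω ^ ((j0 + l * k) * m) := pow_congr' hω (h.mul_right m)
  have h2 : (j0 + l * k) * m = j0 * m + (k * m) * l := by ring
  rw [h1, h2, pow_add, pow_mul ω (k * m) l]

lemma node_inj {ω : ℂ} (hω : IsPrimitiveRoot ω n) {k : ℕ} (hkn : Nat.gcd n k = 1)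
    {s : ℕ} {e : Fin s → Fin n} (he : Function.Injective e) :
    Function.Injective (fun i : Fin s => ω ^ (k * (e i : ℕ))) := by
  have hωk : IsPrimitiveRoot (ω ^ k) n := hω.pow_of_coprime k (by rwa [Nat.Coprime, Nat.gcd_comm])
  intro a b hab
  simp only [pow_mul] at hab
  exact he (Fin.ext (hωk.pow_inj (e a).isLt (e b).isLt hab))

lemma core_vanish (hn : 1 ≤ n) {ω : ℂ} (hω : IsPrimitiveRoot ω n)
    {u k j0 : ℕ} (hkn : Nat.gcd n k = 1)
    {jj : Fin u → Fin n}
    (hcong : ∀ (l : ℕ) (h : l < u), ((jj ⟨l, h⟩ : ℕ)) ≡ j0 + l * k [MOD n])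
    (x : Fin n → ℂ)
    (hx : ∀ l : Fin u, ∑ m, x m * ω ^ ((jj l : ℕ) * (m : ℕ)) = 0)
    (hw : (Finset.univ.filter (fun i => x i ≠ 0)).card ≤ u) :
    x = 0 := by
  classical
  set S := Finset.univ.filter (fun i => x i ≠ 0) with hS
  have hω1 : ω ^ n = 1 := hω.pow_eq_one
  have hωne : ω ≠ 0 := hω.ne_zero (by omega)
  let o := S.orderIsoOfFin rfl
  let e : Fin S.card → Fin n := fun i => (o i : Fin n)
  have heinj : Function.Injective e := fun a b hab => o.injective (Subtype.ext hab)
  have hdet : (Matrix.vandermonde (fun i : Fin S.card => ω ^ (k * (e i : ℕ)))).transpose.det ≠ 0 := by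
    rw [Matrix.det_transpose]
    exact Matrix.det_vandermonde_ne_zero_iff.mpr (node_inj hω hkn heinj)
  set y : Fin S.card → ℂ := fun i => ω ^ (j0 * (e i : ℕ)) * x (e i) with hy
  have hmv : (Matrix.vandermonde (fun i : Fin S.card => ω ^ (k * (e i : ℕ)))).transpose.mulVec y = 0 := by
    funext l
    simp only [Pi.zero_apply]
    have hlu : (l : ℕ) < u := lt_of_lt_of_le l.isLt hw
    have h0 := hx ⟨(l : ℕ), hlu⟩
    calc (Matrix.vandermonde (fun i : Fin S.card => ω ^ (k * (e i : ℕ)))).transpose.mulVec y l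
        = ∑ i : Fin S.card, (ω ^ (k * (e i : ℕ))) ^ (l : ℕ) * y i := by
          simp [Matrix.mulVec, dotProduct, Matrix.transpose_apply, Matrix.vandermonde_apply]
      _ = ∑ i : Fin S.card, x (e i) * ω ^ ((jj ⟨(l : ℕ), hlu⟩ : ℕ) * (e i : ℕ)) := by
          refine Finset.sum_congr rfl fun i _ => ?_
          rw [entry_eq hω1 (hcong (l : ℕ) hlu) (e i : ℕ), hy]
          ring
      _ = ∑ m ∈ S, x m * ω ^ ((jj ⟨(l : ℕ), hlu⟩ : ℕ) * (m : ℕ)) := by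
          rw [← Finset.sum_coe_sort S (fun m => x m * ω ^ ((jj ⟨(l : ℕ), hlu⟩ : ℕ) * (m : ℕ)))]
          exact Fintype.sum_equiv o.toEquiv _ _ (fun i => rfl)
      _ = ∑ m, x m * ω ^ ((jj ⟨(l : ℕ), hlu⟩ : ℕ) * (m : ℕ)) := by
          refine Finset.sum_subset (Finset.subset_univ S) ?_
          intro m _ hm
          have : x m = 0 := by
            by_contra h
            exact hm (by simp [hS, h])
          rw [this, zero_mul]
      _ = 0 := h0
  have hy0 : y = 0 := Matrix.eq_zero_of_mulVec_eq_zero hdet hmv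
  funext m
  simp only [Pi.zero_apply]
  by_contra hxm
  have hmS : m ∈ S := by simp [hS, hxm]
  have h1 := congrFun hy0 (o.symm ⟨m, hmS⟩)
  have h2 : e (o.symm ⟨m, hmS⟩) = m := by
    show ((o (o.symm ⟨m, hmS⟩)) : Fin n) = m
    rw [OrderIso.apply_symm_apply]
  rw [hy] at h1
  simp only [h2, Pi.zero_apply] at h1
  rcases mul_eq_zero.mp h1 with h | h
  · exact pow_ne_zero _ hωne h
  · exact hxm h

lemma rows_li (hn : 1 ≤ n) {ω : ℂ} (hω : IsPrimitiveRoot ω n)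
    {u k j0 : ℕ} (hun : u ≤ n) (hkn : Nat.gcd n k = 1)
    {jj : Fin u → Fin n}
    (hcong : ∀ l : Fin u, ((jj l : ℕ)) ≡ j0 + (l : ℕ) * k [MOD n]) :
    LinearIndependent ℂ (fun l : Fin u => fun m : Fin n => ω ^ ((jj l : ℕ) * (m : ℕ))) := by
  classical
  rw [Fintype.linearIndependent_iff]
  intro c hc
  have hω1 : ω ^ n = 1 := hω.pow_eq_one
  have hωne : ω ≠ 0 := hω.ne_zero (by omega)
  let e : Fin u → Fin n := Fin.castLE hun
  have heinj : Function.Injective e := Fin.castLE_injective hun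
  have hdet : (Matrix.vandermonde (fun i : Fin u => ω ^ (k * (e i : ℕ)))).det ≠ 0 :=
    Matrix.det_vandermonde_ne_zero_iff.mpr (node_inj hω hkn heinj)
  have hmv : (Matrix.vandermonde (fun i : Fin u => ω ^ (k * (e i : ℕ)))).mulVec c = 0 := by
    funext m
    simp only [Pi.zero_apply]
    have h0 := congrFun hc (e m)
    rw [Finset.sum_apply] at h0
    simp only [Pi.smul_apply, smul_eq_mul, Pi.zero_apply] at h0
    have h2 : ω ^ (j0 * (e m : ℕ)) *
        ∑ l : Fin u, (ω ^ (k * (e m : ℕ))) ^ (l : ℕ) * c l = 0 := by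
      rw [Finset.mul_sum, ← h0]
      refine Finset.sum_congr rfl fun l _ => ?_
      rw [entry_eq hω1 (hcong l) (e m : ℕ)]
      ring
    have h4 := (mul_eq_zero.mp h2).resolve_left (pow_ne_zero _ hωne)
    calc (Matrix.vandermonde (fun i : Fin u => ω ^ (k * (e i : ℕ)))).mulVec c m
        = ∑ l : Fin u, (ω ^ (k * (e m : ℕ))) ^ (l : ℕ) * c l := by
          simp [Matrix.mulVec, dotProduct, Matrix.vandermonde_apply]
      _ = 0 := h4
  intro i
  exact congrFun (Matrix.eq_zero_of_mulVec_eq_zero hdet hmv) i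

end Aux


section Aux2

variable {n : ℕ}

lemma mem_dualCode {C : Submodule ℂ (Fin n → ℂ)} {x : Fin n → ℂ} :
    x ∈ dualCode C ↔ ∀ c ∈ C, bil x c = 0 := Iff.rfl

lemma mem_dualCode_span_iff {ι : Type*} (E : ι → Fin n → ℂ) (x : Fin n → ℂ) :
    x ∈ dualCode (Submodule.span ℂ (Set.range E)) ↔ ∀ l, bil x (E l) = 0 := by
  rw [mem_dualCode]
  constructor
  · intro hx l
    exact hx (E l) (Submodule.subset_span ⟨l, rfl⟩)
  · intro h c hc
    induction hc using Submodule.span_induction with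
    | mem c hc => obtain ⟨l, rfl⟩ := hc; exact h l
    | zero => simp [bil]
    | add a b _ _ ha hb =>
        have hab : bil x (a + b) = bil x a + bil x b := by
          simp only [bil, Pi.add_apply, mul_add]
          exact Finset.sum_add_distrib
        rw [hab, ha, hb, add_zero]
    | smul r a _ ha =>
        have hra : bil x (r • a) = r * bil x a := by
          simp only [bil, Pi.smul_apply, smul_eq_mul, Finset.mul_sum]
          exact Finset.sum_congr rfl fun i _ => by ring
        rw [hra, ha, mul_zero]

end Aux2

/-- with `C^⊥` spanned by Fourier rows `E_{j_1},…,E_{j_u}` evenly spaced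
mod `n` with difference `k`, `gcd(n,k)=1`, the dual code `𝒞 = (C^⊥)^⊥` is an MDS
`(n, n-u, u+1)` code. -/
theorem stmt10 (n : ℕ) (hn : 1 ≤ n) (ω : ℂ) (hω : IsPrimitiveRoot ω n)
    (u : ℕ) (hu1 : 1 ≤ u) (hun : u < n)
    (k : ℕ) (hk : 1 ≤ k) (hkn : Nat.gcd n k = 1)
    (jj : Fin u → Fin n)
    (hjj : ∀ (l : ℕ) (h : l + 1 < u),
      ((jj ⟨l + 1, h⟩ : ℕ)) ≡ ((jj ⟨l, by omega⟩ : ℕ)) + k [MOD n])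
    (𝒞 : Submodule ℂ (Fin n → ℂ))
    (h𝒞 : 𝒞 = dualCode (Submodule.span ℂ
      (Set.range fun l : Fin u => fun m : Fin n => ω ^ ((jj l : ℕ) * (m : ℕ))))) :
    Module.finrank ℂ 𝒞 = n - u ∧ minDist 𝒞 = u + 1 := by
  classical
  subst h𝒞
  set E : Fin u → Fin n → ℂ := fun l => fun m : Fin n => ω ^ ((jj l : ℕ) * (m : ℕ)) with hE
  have hω1 : ω ^ n = 1 := hω.pow_eq_one
  have hu0 : (0 : ℕ) < u := hu1
  -- the congruence jj l ≡ jj 0 + l * k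
  have hcong : ∀ (l : ℕ) (h : l < u),
      ((jj ⟨l, h⟩ : ℕ)) ≡ (jj ⟨0, hu0⟩ : ℕ) + l * k [MOD n] := by
    intro l
    induction l with
    | zero =>
      intro h
      simpa using Nat.ModEq.refl ((jj ⟨0, hu0⟩ : ℕ))
    | succ l ih =>
      intro h
      have hl : l < u := by omega
      have h1 := hjj l h
      have h2 := (ih hl).add_right k
      have h3 : (jj ⟨0, hu0⟩ : ℕ) + l * k + k = (jj ⟨0, hu0⟩ : ℕ) + (l + 1) * k := by ring
      exact h1.trans (h3 ▸ h2)
  have hcong' : ∀ l : Fin u, ((jj l : ℕ)) ≡ (jj ⟨0, hu0⟩ : ℕ) + (l : ℕ) * k [MOD n] :=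
    fun l => hcong l.1 l.2
  have hbil : ∀ (x : Fin n → ℂ) (l : Fin u),
      bil x (E l) = ∑ m, x m * ω ^ ((jj l : ℕ) * (m : ℕ)) := by
    intro x l
    rw [hE]
    exact rfl
  -- lower bound for the weight of nonzero codewords
  have hlow : ∀ c ∈ dualCode (Submodule.span ℂ (Set.range E)), c ≠ 0 → u + 1 ≤ hWeight c := by
    intro c hc hc0
    by_contra hlt
    push_neg at hlt
    have hble := (mem_dualCode_span_iff E c).mp hc
    have hx : ∀ l : Fin u, ∑ m, c m * ω ^ ((jj l : ℕ) * (m : ℕ)) = 0 := by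
      intro l
      rw [← hbil c l]
      exact hble l
    have hwc : (Finset.univ.filter (fun i => c i ≠ 0)).card ≤ u := by
      rw [← hWeight_eq_card]
      omega
    exact hc0 (core_vanish hn hω hkn hcong c hx hwc)
  -- dimension
  have hLI : LinearIndependent ℂ E := rows_li hn hω (le_of_lt hun) hkn hcong'
  set M : Matrix (Fin u) (Fin n) ℂ := Matrix.of E with hM
  have hb : ∀ (x : Fin n → ℂ) (l : Fin u), bil x (E l) = M.mulVec x l := by
    intro x l
    rw [hbil, hM]
    simp [Matrix.mulVec, dotProduct, hE, mul_comm]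
  have hker : dualCode (Submodule.span ℂ (Set.range E)) = LinearMap.ker M.mulVecLin := by
    ext x
    rw [mem_dualCode_span_iff, LinearMap.mem_ker]
    have hmv : M.mulVecLin x = M.mulVec x := Matrix.mulVecLin_apply M x
    rw [hmv, funext_iff]
    simp only [Pi.zero_apply]
    exact forall_congr' fun l => by rw [hb x l]
  have hrank : Module.finrank ℂ (LinearMap.range M.mulVecLin) = u := by
    have h1 : M.rank = Module.finrank ℂ (Submodule.span ℂ (Set.range M)) :=
      Matrix.rank_eq_finrank_span_row M
    have h2 : M.rank = Module.finrank ℂ (LinearMap.range M.mulVecLin) := rfl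
    have h3 : Set.range M = Set.range E := rfl
    rw [← h2, h1, h3, finrank_span_eq_card hLI, Fintype.card_fin]
  have hdim : Module.finrank ℂ (dualCode (Submodule.span ℂ (Set.range E))) = n - u := by
    have hrn := LinearMap.finrank_range_add_finrank_ker M.mulVecLin
    rw [Module.finrank_pi, Fintype.card_fin, hrank] at hrn
    rw [hker]
    omega
  refine ⟨hdim, ?_⟩
  -- existence of a codeword of weight u + 1
  have hle : u + 1 ≤ n := hun
  set N : Matrix (Fin u) (Fin (u + 1)) ℂ :=
    Matrix.of (fun l i => ω ^ ((jj l : ℕ) * ((Fin.castLE hle i : Fin n) : ℕ))) with hN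
  have hkerN : LinearMap.ker N.mulVecLin ≠ ⊥ := by
    intro hbot
    have hinj : Function.Injective N.mulVecLin := LinearMap.ker_eq_bot.mp hbot
    have hle2 := LinearMap.finrank_le_finrank_of_injective hinj
    rw [Module.finrank_pi, Module.finrank_pi, Fintype.card_fin, Fintype.card_fin] at hle2
    omega
  obtain ⟨y, hy, hy0⟩ := Submodule.exists_mem_ne_zero_of_ne_bot hkerN
  rw [LinearMap.mem_ker] at hy
  set x : Fin n → ℂ := fun m => if h : (m : ℕ) < u + 1 then y ⟨m, h⟩ else 0 with hxdef
  have hxc : ∀ i : Fin (u + 1), x (Fin.castLE hle i) = y i := by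
    intro i
    rw [hxdef]
    simp
    intro h
    exact absurd h (by omega)
  have hx0 : ∀ m : Fin n, ¬ ((m : ℕ) < u + 1) → x m = 0 := by
    intro m h
    rw [hxdef]
    exact dif_neg h
  have hmemmap : ∀ m : Fin n,
      m ∈ (Finset.univ : Finset (Fin (u + 1))).map (Fin.castLEEmb hle) ↔ (m : ℕ) < u + 1 := by
    intro m
    constructor
    · intro hm
      rw [Finset.mem_map] at hm
      obtain ⟨i, _, rfl⟩ := hm
      simpa using i.isLt
    · intro h
      rw [Finset.mem_map]
      exact ⟨⟨(m : ℕ), h⟩, Finset.mem_univ _, by ext; simp⟩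
  have hxne : x ≠ 0 := by
    obtain ⟨i, hi⟩ := Function.ne_iff.mp hy0
    intro h
    apply hi
    have h2 := congrFun h (Fin.castLE hle i)
    rw [hxc i] at h2
    simpa using h2
  have hxmem : x ∈ dualCode (Submodule.span ℂ (Set.range E)) := by
    rw [mem_dualCode_span_iff]
    intro l
    rw [hbil]
    have hyl : N.mulVec y l = 0 := by
      have := congrFun hy l
      rwa [Matrix.mulVecLin_apply] at this
    calc ∑ m : Fin n, x m * ω ^ ((jj l : ℕ) * (m : ℕ))
        = ∑ m ∈ (Finset.univ : Finset (Fin (u + 1))).map (Fin.castLEEmb hle),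
            x m * ω ^ ((jj l : ℕ) * (m : ℕ)) := by
          refine (Finset.sum_subset (Finset.subset_univ _) ?_).symm
          intro m _ hm
          rw [hx0 m (fun hc => hm ((hmemmap m).mpr hc)), zero_mul]
      _ = ∑ i : Fin (u + 1),
            x (Fin.castLE hle i) * ω ^ ((jj l : ℕ) * ((Fin.castLE hle i : Fin n) : ℕ)) := by
          rw [Finset.sum_map]
          rfl
      _ = ∑ i : Fin (u + 1), N l i * y i := by
          refine Finset.sum_congr rfl fun i _ => ?_
          rw [hxc i, hN]
          simp [mul_comm]
      _ = N.mulVec y l := rfl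
      _ = 0 := hyl
  have hwle : hWeight x ≤ u + 1 := by
    rw [hWeight_eq_card]
    have hsub : Finset.univ.filter (fun i => x i ≠ 0) ⊆
        (Finset.univ : Finset (Fin (u + 1))).map (Fin.castLEEmb hle) := by
      intro m hm
      rw [Finset.mem_filter] at hm
      rw [hmemmap m]
      by_contra hc
      exact hm.2 (hx0 m hc)
    calc (Finset.univ.filter (fun i => x i ≠ 0)).card
        ≤ ((Finset.univ : Finset (Fin (u + 1))).map (Fin.castLEEmb hle)).card :=
          Finset.card_le_card hsub
      _ = u + 1 := by rw [Finset.card_map, Finset.card_univ, Fintype.card_fin]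
  have hwx : hWeight x = u + 1 := le_antisymm hwle (hlow x hxmem hxne)
  have hmem : u + 1 ∈ {d | ∃ c ∈ dualCode (Submodule.span ℂ (Set.range E)),
      c ≠ 0 ∧ hWeight c = d} := ⟨x, hxmem, hxne, hwx⟩
  rw [minDist]
  refine le_antisymm (Nat.sInf_le hmem) (le_csInf ⟨u + 1, hmem⟩ ?_)
  rintro d ⟨c, hc, hc0, rfl⟩
  exact hlow c hc hc0
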